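/- Let (P, u) be a weighted set of points in ℝ^d with Σ_{p∈P} u(p) = 1 and u(p) > 0 for all p ∈ P, and let {P_1, …, P_k} be a partition of P into k disjoint nonempty clusters, each of size at most s. For every i ∈ [k] let μ_i = (1 / Σ_{q∈P_i} u(q)) · Σ_{p∈P_i} u(p)·p and u'(μ_i) = Σ_{p∈P_i} u(p). Suppose (μ̃, w̃) is a Caratheodory set for ({μ_1, …, μ_k}, u'): μ̃ ⊆ {μ_1, …, μ_k}, |μ̃| ≤ d + 1, Σ_{μ_i∈μ̃} w̃(μ_i) = 1, and Σ_{μ_i∈μ̃} w̃(μ_i)·μ_i = Σ_{i=1}^k u'(μ_i)·μ_i. Define C = ∪_{μ_i∈μ̃} P_i and, for every μ_i ∈ μ̃ and p ∈ P_i, w(p) = w̃(μ_i)·u(p) / Σ_{q∈P_i} u(q). Then C ⊆ P, |C| ≤ (d + 1)·s, Σ_{p∈C} w(p) = 1, and Σ_{p∈C} w(p)·p = Σ_{p∈P} u(p)·p. -/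

import Mathlib

/-- Merge step of the Fast-Caratheodory-Set algorithm: a Caratheodory set
`(μ̃, w̃)` of the `k` cluster means (encoded by a set `T` of at most `d + 1`
cluster indices) lifts to a weighted subset `C ⊆ P` of at most `(d + 1) * s`
original points with total weight `1` and the same weighted mean as `(P, u)`. -/
theorem fast_caratheodory_merge_step (d k s : ℕ) (P : Finset (Fin d → ℝ))
    (u : (Fin d → ℝ) → ℝ) (hupos : ∀ p ∈ P, 0 < u p)
    (husum : ∑ p ∈ P, u p = 1)
    (Pc : Fin k → Finset (Fin d → ℝ))
    (hdisj : ∀ i j, i ≠ j → Disjoint (Pc i) (Pc j))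
    (hunion : P = Finset.univ.biUnion Pc)
    (hne : ∀ i, (Pc i).Nonempty)
    (hsize : ∀ i, (Pc i).card ≤ s)
    (μ : Fin k → (Fin d → ℝ))
    (hμ : ∀ i, μ i = (∑ q ∈ Pc i, u q)⁻¹ • ∑ p ∈ Pc i, u p • p)
    (u' : Fin k → ℝ) (hu' : ∀ i, u' i = ∑ q ∈ Pc i, u q)
    (T : Finset (Fin k)) (w' : Fin k → ℝ)
    (hTcard : T.card ≤ d + 1)
    (hw'nonneg : ∀ i ∈ T, 0 ≤ w' i)
    (hw'sum : ∑ i ∈ T, w' i = 1)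
    (hw'mean : ∑ i ∈ T, w' i • μ i = ∑ i, u' i • μ i)
    (C : Finset (Fin d → ℝ)) (hC : C = T.biUnion Pc)
    (w : (Fin d → ℝ) → ℝ)
    (hw : ∀ i ∈ T, ∀ p ∈ Pc i, w p = w' i * u p / ∑ q ∈ Pc i, u q) :
    C ⊆ P ∧ C.card ≤ (d + 1) * s ∧
    ∑ p ∈ C, w p = 1 ∧ ∑ p ∈ C, w p • p = ∑ p ∈ P, u p • p := by
  have subset : C ⊆ P := by
    subst hC hunion
    intro p hp
    simp only [Finset.mem_biUnion] at hp ⊢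
    obtain ⟨i, _, hpi⟩ := hp
    exact ⟨i, Finset.mem_univ i, hpi⟩
  have hpossum : ∀ i : Fin k, 0 < ∑ q ∈ Pc i, u q := by
    intro i
    apply Finset.sum_pos
    · intro q hq
      exact hupos q (by subst hunion; exact Finset.mem_biUnion.2 ⟨i, Finset.mem_univ i, hq⟩)
    · exact hne i
  have hdisj' : (T : Set (Fin k)).PairwiseDisjoint Pc := by
    intro i _ j _ hij; exact hdisj i j hij
  have hdisjU : ((Finset.univ : Finset (Fin k)) : Set (Fin k)).PairwiseDisjoint Pc := by
    intro i _ j _ hij; exact hdisj i j hij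
  refine ⟨subset, ?_, ?_, ?_⟩
  · subst hC
    calc (T.biUnion Pc).card ≤ ∑ i ∈ T, (Pc i).card := Finset.card_biUnion_le
      _ ≤ ∑ _i ∈ T, s := Finset.sum_le_sum fun i _ => hsize i
      _ = T.card * s := by rw [Finset.sum_const, smul_eq_mul]
      _ ≤ (d + 1) * s := Nat.mul_le_mul_right s hTcard
  · subst hC
    rw [Finset.sum_biUnion hdisj']
    rw [← hw'sum]
    refine Finset.sum_congr rfl fun i hi => ?_
    rw [Finset.sum_congr rfl fun p hp => hw i hi p hp]
    rw [← Finset.sum_div, ← Finset.mul_sum]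
    rw [mul_div_assoc, div_self (hpossum i).ne', mul_one]
  · subst hC
    rw [Finset.sum_biUnion hdisj']
    have h1 : ∀ i ∈ T, ∑ p ∈ Pc i, w p • p = w' i • μ i := by
      intro i hi
      rw [Finset.sum_congr rfl fun p hp => by rw [hw i hi p hp], hμ i, smul_smul,
        Finset.smul_sum]
      refine Finset.sum_congr rfl fun p hp => ?_
      rw [smul_smul]
      congr 1
      rw [div_eq_mul_inv]
      ring
    rw [Finset.sum_congr rfl h1, hw'mean]
    have h2 : ∀ i : Fin k, u' i • μ i = ∑ p ∈ Pc i, u p • p := by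
      intro i
      rw [hu' i, hμ i, smul_smul, mul_inv_cancel₀ (hpossum i).ne', one_smul]
    rw [Finset.sum_congr rfl fun i _ => h2 i]
    rw [hunion, Finset.sum_biUnion hdisjU]
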